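/- Let f₁ = (1, 0, 1, 1, 1, …) and f₂ = (0, 1, 1, 1, 1, …) in ℓ∞ and let F be their linear span. Then λ(F, ℓ∞) > 1; that is, inf{‖P‖ : P : ℓ∞ → ℓ∞ continuous linear, P ∘ P = P, range(P) = F} > 1. In particular, there exists no continuous linear projection of ℓ∞ onto F of operator norm 1. -/

import Mathlib

set_option maxHeartbeats 1000000
set_option synthInstance.maxHeartbeats 1000000


open scoped ENNReal

noncomputable section

/-- The sequence `(1, 0, 1, 1, 1, …)`. -/
def f₁fn : ℕ → ℝ := fun i => if i = 1 then 0 else 1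

/-- The sequence `(0, 1, 1, 1, 1, …)`. -/
def f₂fn : ℕ → ℝ := fun i => if i = 0 then 0 else 1

/-- `(1, 0, 1, 1, 1, …)` as an element of `ℓ∞`. -/
def f₁ : lp (fun _ : ℕ => ℝ) ∞ :=
  ⟨f₁fn, memℓp_infty ⟨1, by rintro r ⟨i, rfl⟩; simp only [f₁fn]; split <;> simp⟩⟩

/-- `(0, 1, 1, 1, 1, …)` as an element of `ℓ∞`. -/
def f₂ : lp (fun _ : ℕ => ℝ) ∞ :=
  ⟨f₂fn, memℓp_infty ⟨1, by rintro r ⟨i, rfl⟩; simp only [f₂fn]; split <;> simp⟩⟩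

/-- The subspace `G = {x ∈ ℓ∞ : x 0 = 0 ∧ x 1 = 0}`. -/
def Gsub : Submodule ℝ (lp (fun _ : ℕ => ℝ) ∞) where
  carrier := {x | x 0 = 0 ∧ x 1 = 0}
  add_mem' := by
    rintro a b ⟨ha0, ha1⟩ ⟨hb0, hb1⟩
    constructor <;> simp [lp.coeFn_add, ha0, ha1, hb0, hb1]
  zero_mem' := by constructor <;> simp [lp.coeFn_zero]
  smul_mem' := by
    rintro c x ⟨h0, h1⟩
    constructor <;> simp [lp.coeFn_smul, h0, h1]
-- test vectors
def vfn (x y z : ℝ) : ℕ → ℝ := fun i => if i = 0 then x else if i = 1 then y else z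

lemma vfn_mem (x y z : ℝ) : Memℓp (vfn x y z) ∞ :=
  memℓp_infty ⟨max ‖x‖ (max ‖y‖ ‖z‖), by
    rintro r ⟨i, rfl⟩; simp only [vfn]; split_ifs
    · exact le_max_left _ _
    · exact le_trans (le_max_left _ _) (le_max_right _ _)
    · exact le_trans (le_max_right _ _) (le_max_right _ _)⟩

def vlp (x y z : ℝ) : lp (fun _ : ℕ => ℝ) ∞ := ⟨vfn x y z, vfn_mem x y z⟩

lemma vlp_coe (x y z : ℝ) : (vlp x y z : ℕ → ℝ) = vfn x y z := rfl

lemma vlp_norm_le {x y z : ℝ} (hx : |x| ≤ 1) (hy : |y| ≤ 1) (hz : |z| ≤ 1) :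
    ‖vlp x y z‖ ≤ 1 := by
  apply lp.norm_le_of_forall_le zero_le_one
  intro i
  rw [vlp_coe]
  simp only [vfn, Real.norm_eq_abs]
  split_ifs <;> assumption

lemma vlp_decomp (x y z : ℝ) :
    vlp x y z = x • vlp 1 0 0 + y • vlp 0 1 0 + z • vlp 0 0 1 := by
  apply lp.ext
  funext i
  simp only [lp.coeFn_add, lp.coeFn_smul, Pi.add_apply, Pi.smul_apply, vlp_coe, vfn,
    smul_eq_mul]
  split_ifs <;> ring

lemma f₁_eq : f₁ = vlp 1 0 1 := by
  apply lp.ext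
  funext i
  show f₁fn i = vfn 1 0 1 i
  simp only [f₁fn, vfn]
  split_ifs <;> simp_all

lemma f₂_eq : f₂ = vlp 0 1 1 := by
  apply lp.ext
  funext i
  show f₂fn i = vfn 0 1 1 i
  simp only [f₂fn, vfn]
  split_ifs <;> simp_all

lemma coord_comb (α β : ℝ) (i : ℕ) :
    ((α • f₁ + β • f₂ : lp (fun _ : ℕ => ℝ) ∞) : ℕ → ℝ) i = α * f₁fn i + β * f₂fn i := by
  simp only [lp.coeFn_add, lp.coeFn_smul, Pi.add_apply, Pi.smul_apply, smul_eq_mul]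
  rfl

lemma proj_norm_ge (P : lp (fun _ : ℕ => ℝ) ∞ →L[ℝ] lp (fun _ : ℕ => ℝ) ∞)
    (hPP : P.comp P = P) (hrange : LinearMap.range (P : lp (fun _ : ℕ => ℝ) ∞ →ₗ[ℝ] lp (fun _ : ℕ => ℝ) ∞) = Submodule.span ℝ {f₁, f₂}) :
    5 / 4 ≤ ‖P‖ := by
  -- P fixes f₁ and f₂
  have hfix : ∀ w : lp (fun _ : ℕ => ℝ) ∞, w ∈ Submodule.span ℝ {f₁, f₂} → P w = w := by
    intro w hw
    rw [← hrange] at hw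
    obtain ⟨z, hz⟩ := hw
    rw [← hz, ContinuousLinearMap.coe_coe, ← ContinuousLinearMap.comp_apply, hPP]
  -- decompositions of the images of the three basis test vectors
  have hmem : ∀ v : lp (fun _ : ℕ => ℝ) ∞, ∃ α β : ℝ, α • f₁ + β • f₂ = P v := by
    intro v
    have : P v ∈ Submodule.span ℝ {f₁, f₂} := by
      rw [← hrange]; exact LinearMap.mem_range_self (P : lp (fun _ : ℕ => ℝ) ∞ →ₗ[ℝ] lp (fun _ : ℕ => ℝ) ∞) v
    exact Submodule.mem_span_pair.mp this
  obtain ⟨a, a', ha⟩ := hmem (vlp 1 0 0)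
  obtain ⟨b, b', hb⟩ := hmem (vlp 0 1 0)
  obtain ⟨c, c', hc⟩ := hmem (vlp 0 0 1)
  -- coordinates of P on a general test vector
  have hP : ∀ x y z : ℝ,
      P (vlp x y z) = (x * a + y * b + z * c) • f₁ + (x * a' + y * b' + z * c') • f₂ := by
    intro x y z
    rw [vlp_decomp x y z, map_add, map_add, map_smul, map_smul, map_smul, ← ha, ← hb, ← hc]
    simp only [smul_add, smul_smul, add_smul]
    abel
  -- coordinate values
  have hcoord : ∀ α β : ℝ,
      ((α • f₁ + β • f₂ : lp (fun _ : ℕ => ℝ) ∞) : ℕ → ℝ) 0 = α ∧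
      ((α • f₁ + β • f₂ : lp (fun _ : ℕ => ℝ) ∞) : ℕ → ℝ) 1 = β ∧
      ((α • f₁ + β • f₂ : lp (fun _ : ℕ => ℝ) ∞) : ℕ → ℝ) 2 = α + β := by
    intro α β
    refine ⟨?_, ?_, ?_⟩ <;> rw [coord_comb] <;> simp [f₁fn, f₂fn]
  -- the key bounds
  have key : ∀ x y z : ℝ, |x| ≤ 1 → |y| ≤ 1 → |z| ≤ 1 → ∀ i : ℕ,
      |(P (vlp x y z) : ℕ → ℝ) i| ≤ ‖P‖ := by
    intro x y z hx hy hz i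
    have h1 : ‖(P (vlp x y z) : ℕ → ℝ) i‖ ≤ ‖P (vlp x y z)‖ :=
      lp.norm_apply_le_norm ENNReal.top_ne_zero _ i
    have h2 : ‖P (vlp x y z)‖ ≤ ‖P‖ * ‖vlp x y z‖ := P.le_opNorm _
    have h3 : ‖P‖ * ‖vlp x y z‖ ≤ ‖P‖ * 1 :=
      mul_le_mul_of_nonneg_left (vlp_norm_le hx hy hz) (norm_nonneg P)
    rw [Real.norm_eq_abs] at h1
    linarith
  -- constraints from P f₁ = f₁, P f₂ = f₂
  have hf1 : P (vlp 1 0 1) = vlp 1 0 1 := by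
    rw [← f₁_eq]
    exact hfix f₁ (Submodule.subset_span (Set.mem_insert _ _))
  have hf2 : P (vlp 0 1 1) = vlp 0 1 1 := by
    rw [← f₂_eq]
    exact hfix f₂ (Submodule.subset_span (by simp))
  have e1 : a + c = 1 := by
    have := congrArg (fun w : lp (fun _ : ℕ => ℝ) ∞ => (w : ℕ → ℝ) 0) hf1
    rw [hP 1 0 1] at this
    simp only at this
    rw [(hcoord _ _).1] at this
    simpa [vlp_coe, vfn] using this
  have e2 : a' + c' = 0 := by
    have := congrArg (fun w : lp (fun _ : ℕ => ℝ) ∞ => (w : ℕ → ℝ) 1) hf1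
    rw [hP 1 0 1] at this
    simp only at this
    rw [(hcoord _ _).2.1] at this
    simpa [vlp_coe, vfn] using this
  have e3 : b + c = 0 := by
    have := congrArg (fun w : lp (fun _ : ℕ => ℝ) ∞ => (w : ℕ → ℝ) 0) hf2
    rw [hP 0 1 1] at this
    simp only at this
    rw [(hcoord _ _).1] at this
    simpa [vlp_coe, vfn] using this
  have e4 : b' + c' = 1 := by
    have := congrArg (fun w : lp (fun _ : ℕ => ℝ) ∞ => (w : ℕ → ℝ) 1) hf2
    rw [hP 0 1 1] at this
    simp only at this
    rw [(hcoord _ _).2.1] at this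
    simpa [vlp_coe, vfn] using this
  -- sign function
  set sg : ℝ → ℝ := fun x => if 0 ≤ x then 1 else -1 with hsg
  have hsg1 : ∀ x : ℝ, |sg x| ≤ 1 := by
    intro x; rw [hsg]; simp only; split_ifs <;> simp
  have hsg2 : ∀ x : ℝ, sg x * x = |x| := by
    intro x; rw [hsg]; simp only; split_ifs with h
    · rw [abs_of_nonneg h]; ring
    · rw [abs_of_neg (lt_of_not_ge h)]; ring
  -- bound A
  have hA : |a| + |b| + |c| ≤ ‖P‖ := by
    have h := key (sg a) (sg b) (sg c) (hsg1 a) (hsg1 b) (hsg1 c) 0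
    rw [hP] at h
    rw [(hcoord _ _).1] at h
    calc |a| + |b| + |c| = sg a * a + sg b * b + sg c * c := by
          rw [hsg2, hsg2, hsg2]
      _ ≤ |sg a * a + sg b * b + sg c * c| := le_abs_self _
      _ ≤ ‖P‖ := h
  have hB : |a'| + |b'| + |c'| ≤ ‖P‖ := by
    have h := key (sg a') (sg b') (sg c') (hsg1 a') (hsg1 b') (hsg1 c') 1
    rw [hP] at h
    rw [(hcoord _ _).2.1] at h
    calc |a'| + |b'| + |c'| = sg a' * a' + sg b' * b' + sg c' * c' := by
          rw [hsg2, hsg2, hsg2]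
      _ ≤ |sg a' * a' + sg b' * b' + sg c' * c'| := le_abs_self _
      _ ≤ ‖P‖ := h
  have hC : |a + a'| + |b + b'| + |c + c'| ≤ ‖P‖ := by
    have h := key (sg (a+a')) (sg (b+b')) (sg (c+c')) (hsg1 _) (hsg1 _) (hsg1 _) 2
    rw [hP] at h
    rw [(hcoord _ _).2.2] at h
    calc |a + a'| + |b + b'| + |c + c'|
        = sg (a+a') * (a+a') + sg (b+b') * (b+b') + sg (c+c') * (c+c') := by
          rw [hsg2, hsg2, hsg2]
      _ ≤ |(sg (a+a') * a + sg (b+b') * b + sg (c+c') * c) +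
            (sg (a+a') * a' + sg (b+b') * b' + sg (c+c') * c')| := by
          have : sg (a+a') * (a+a') + sg (b+b') * (b+b') + sg (c+c') * (c+c')
              = (sg (a+a') * a + sg (b+b') * b + sg (c+c') * c) +
                (sg (a+a') * a' + sg (b+b') * b' + sg (c+c') * c') := by ring
          rw [this]; exact le_abs_self _
      _ ≤ ‖P‖ := h
  -- final arithmetic
  have fa1 := le_abs_self a; have fa2 := neg_abs_le a
  have fb1 := le_abs_self b; have fb2 := neg_abs_le b
  have fc1 := le_abs_self c; have fc2 := neg_abs_le c
  have fa1' := le_abs_self a'; have fa2' := neg_abs_le a'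
  have fb1' := le_abs_self b'; have fb2' := neg_abs_le b'
  have fc1' := le_abs_self c'; have fc2' := neg_abs_le c'
  have g1 := le_abs_self (a + a'); have g2 := neg_abs_le (a + a')
  have g3 := le_abs_self (b + b'); have g4 := neg_abs_le (b + b')
  have g5 := le_abs_self (c + c'); have g6 := neg_abs_le (c + c')
  rcases le_total (c + c') 1 with hs | hs
  · linarith
  · linarith

-- coordinate functional
def coordCLM (i : ℕ) : lp (fun _ : ℕ => ℝ) ∞ →L[ℝ] ℝ :=
  LinearMap.mkContinuous
    { toFun := fun x => x i
      map_add' := fun x y => by simp [lp.coeFn_add]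
      map_smul' := fun c x => by simp [lp.coeFn_smul] } 1
    (fun x => by rw [one_mul]; exact lp.norm_apply_le_norm ENNReal.top_ne_zero x i)

def P₀ : lp (fun _ : ℕ => ℝ) ∞ →L[ℝ] lp (fun _ : ℕ => ℝ) ∞ :=
  (coordCLM 0).smulRight f₁ + (coordCLM 1).smulRight f₂

lemma P₀_apply (x : lp (fun _ : ℕ => ℝ) ∞) :
    P₀ x = (x : ℕ → ℝ) 0 • f₁ + (x : ℕ → ℝ) 1 • f₂ := rfl

lemma P₀_proj : P₀.comp P₀ = P₀ := by
  apply ContinuousLinearMap.ext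
  intro x
  rw [ContinuousLinearMap.comp_apply, P₀_apply (P₀ x), P₀_apply x, coord_comb, coord_comb]
  simp only [f₁fn, f₂fn]
  norm_num

lemma P₀_range : LinearMap.range (P₀ : lp (fun _ : ℕ => ℝ) ∞ →ₗ[ℝ] lp (fun _ : ℕ => ℝ) ∞) = Submodule.span ℝ {f₁, f₂} := by
  apply le_antisymm
  · rintro y ⟨x, rfl⟩
    rw [ContinuousLinearMap.coe_coe, P₀_apply]
    exact Submodule.add_mem _
      (Submodule.smul_mem _ _ (Submodule.subset_span (Set.mem_insert _ _)))
      (Submodule.smul_mem _ _ (Submodule.subset_span (by simp)))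
  · rw [Submodule.span_le]
    rintro w (rfl | rfl)
    · refine ⟨f₁, ?_⟩
      rw [ContinuousLinearMap.coe_coe, P₀_apply]
      have h0 : (f₁ : ℕ → ℝ) 0 = 1 := by show f₁fn 0 = 1; simp [f₁fn]
      have h1 : (f₁ : ℕ → ℝ) 1 = 0 := by show f₁fn 1 = 0; simp [f₁fn]
      rw [h0, h1]; simp
    · refine ⟨f₂, ?_⟩
      rw [ContinuousLinearMap.coe_coe, P₀_apply]
      have h0 : (f₂ : ℕ → ℝ) 0 = 0 := by show f₂fn 0 = 0; simp [f₂fn]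
      have h1 : (f₂ : ℕ → ℝ) 1 = 1 := by show f₂fn 1 = 1; simp [f₂fn]
      rw [h0, h1]; simp

/-- The relative projection constant of a subspace `W` of a normed space `Y`:
the infimum of the operator norms of continuous linear projections of `Y` onto `W`. -/
def relProjConst {Y : Type*} [NormedAddCommGroup Y] [NormedSpace ℝ Y]
    (W : Submodule ℝ Y) : ℝ :=
  sInf {c | ∃ P : Y →L[ℝ] Y, P.comp P = P ∧ LinearMap.range (P : Y →ₗ[ℝ] Y) = W ∧ ‖P‖ = c}

/-- For `F = span {f₁, f₂} ⊆ ℓ∞`, the relative projection constant satisfies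
`λ(F, ℓ∞) > 1`; in particular there is no norm-one projection of `ℓ∞` onto `F`. -/
theorem one_lt_relProjConst_span :
    1 < relProjConst (Submodule.span ℝ {f₁, f₂}) ∧
      ¬∃ P : lp (fun _ : ℕ => ℝ) ∞ →L[ℝ] lp (fun _ : ℕ => ℝ) ∞,
        P.comp P = P ∧ LinearMap.range (P : lp (fun _ : ℕ => ℝ) ∞ →ₗ[ℝ] lp (fun _ : ℕ => ℝ) ∞) = Submodule.span ℝ {f₁, f₂} ∧ ‖P‖ = 1 := by
  have h54 : (5/4 : ℝ) ≤ relProjConst (Submodule.span ℝ {f₁, f₂}) := by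
    apply le_csInf
    · exact ⟨‖P₀‖, P₀, P₀_proj, P₀_range, rfl⟩
    · rintro c ⟨P, h1, h2, rfl⟩
      exact proj_norm_ge P h1 h2
  constructor
  · linarith
  · rintro ⟨P, h1, h2, h3⟩
    have := proj_norm_ge P h1 h2
    rw [h3] at this
    linarith

end
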